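/- Let f : ℝ^d → ℝ be continuous and ℤ^d-periodic, let ω, φ ∈ ℝ^d, and let b_j = f(jω + φ). Then for every θ ∈ ℝ the limit C(θ) = lim_{J→∞} (1/J) ∑_{j=1}^{J} e^{−iθj} b_j exists in ℂ. -/

import Mathlib

open Set Filter

section AP13Aux

open Complex Submodule

noncomputable section

namespace AP13

local instance : Fact (0 < (1:ℝ)) := ⟨one_pos⟩

variable {d : ℕ}

/-- The `d`-dimensional torus. -/
abbrev Tor (d : ℕ) := Fin d → AddCircle (1:ℝ)

/-- The projection from `ℝ^d` to the torus. -/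
def proj (d : ℕ) : (Fin d → ℝ) → Tor d := Pi.map fun _ x => (x : AddCircle (1:ℝ))

lemma isOpenQuotientMap_proj : IsOpenQuotientMap (proj d) :=
  IsOpenQuotientMap.piMap fun _ => QuotientAddGroup.isOpenQuotientMap_mk

/-- Multidimensional characters on the torus. -/
def mchar (k : Fin d → ℤ) : C(Tor d, ℂ) :=
  ∏ i : Fin d, (fourier (k i)).comp ⟨fun x => x i, continuous_apply i⟩

lemma mchar_apply (k : Fin d → ℤ) (x : Tor d) :
    mchar k x = ∏ i : Fin d, fourier (k i) (x i) := by
  simp [mchar]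

lemma mchar_zero : mchar (0 : Fin d → ℤ) = 1 := by
  ext x; simp [mchar_apply, fourier_zero]

lemma mchar_add (k l : Fin d → ℤ) : mchar (k + l) = mchar k * mchar l := by
  ext x
  simp only [mchar_apply, ContinuousMap.mul_apply, ← Finset.prod_mul_distrib]
  exact Finset.prod_congr rfl fun i _ => by simp [fourier_add]

lemma mchar_neg (k : Fin d → ℤ) : mchar (-k) = star (mchar k) := by
  ext x
  simp only [mchar_apply, ContinuousMap.star_apply]
  rw [show (star (∏ i : Fin d, (fourier (k i) (x i) : ℂ)) : ℂ)
      = ∏ i : Fin d, star (fourier (k i) (x i) : ℂ) from star_prod _ _]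
  exact Finset.prod_congr rfl fun i _ => by simp [fourier_neg]

/-- The star subalgebra generated by the characters. -/
def mSubalgebra (d : ℕ) : StarSubalgebra ℂ C(Tor d, ℂ) where
  toSubalgebra := Algebra.adjoin ℂ (Set.range (mchar (d := d)))
  star_mem' := by
    show Algebra.adjoin ℂ (Set.range (mchar (d := d))) ≤
      star (Algebra.adjoin ℂ (Set.range (mchar (d := d))))
    refine Algebra.adjoin_le ?_
    rintro - ⟨k, rfl⟩
    refine Algebra.subset_adjoin ⟨-k, ?_⟩
    rw [mchar_neg]

theorem mSubalgebra_coe (d : ℕ) :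
    Subalgebra.toSubmodule (mSubalgebra d).toSubalgebra
      = span ℂ (Set.range (mchar (d := d))) := by
  apply Algebra.adjoin_eq_span_of_subset
  refine Subset.trans ?_ Submodule.subset_span
  intro x hx
  refine Submonoid.closure_induction (fun _ => id) ⟨0, mchar_zero⟩ ?_ hx
  rintro - - - - ⟨k, rfl⟩ ⟨l, rfl⟩
  exact ⟨k + l, mchar_add k l⟩

theorem mSubalgebra_separatesPoints (d : ℕ) : (mSubalgebra d).SeparatesPoints := by
  intro x y hxy
  obtain ⟨i, hi⟩ := Function.ne_iff.mp hxy
  refine ⟨_, ⟨mchar (Pi.single i 1), Algebra.subset_adjoin ⟨_, rfl⟩, rfl⟩, ?_⟩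
  have key : ∀ z : Tor d, mchar (Pi.single i 1) z = fourier 1 (z i) := by
    intro z
    rw [mchar_apply]
    rw [Finset.prod_eq_single_of_mem i (Finset.mem_univ i)]
    · rw [Pi.single_eq_same]
    · intro j _ hj
      rw [Pi.single_eq_of_ne hj]
      exact fourier_zero
  dsimp only
  rw [key, key, fourier_one, fourier_one]
  contrapose! hi
  rw [Circle.coe_inj] at hi
  exact AddCircle.injective_toCircle one_ne_zero hi

theorem mSubalgebra_closure_eq_top (d : ℕ) :
    (mSubalgebra d).topologicalClosure = ⊤ :=
  ContinuousMap.starSubalgebra_topologicalClosure_eq_top_of_separatesPoints _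
    (mSubalgebra_separatesPoints d)

theorem span_mchar_closure_eq_top (d : ℕ) :
    (span ℂ (Set.range (mchar (d := d)))).topologicalClosure = ⊤ := by
  rw [← mSubalgebra_coe]
  exact congr_arg (Subalgebra.toSubmodule <| StarSubalgebra.toSubalgebra ·)
    (mSubalgebra_closure_eq_top d)

/-- The lift of a periodic function to the torus. -/
def tlift (f : (Fin d → ℝ) → ℝ) : Tor d → ℝ := fun x => f fun i => (x i).out

lemma tlift_proj (f : (Fin d → ℝ) → ℝ)
    (hper : ∀ (x : Fin d → ℝ) (m : Fin d → ℤ), f (x + fun i => (m i : ℝ)) = f x)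
    (x : Fin d → ℝ) : tlift f (proj d x) = f x := by
  have h : ∀ i : Fin d, ∃ m : ℤ, ((proj d x) i).out = x i + m := by
    intro i
    have h1 : (((proj d x) i).out : AddCircle (1:ℝ)) = ((x i : AddCircle (1:ℝ))) :=
      QuotientAddGroup.out_eq' _
    have h2 : -((proj d x) i).out + x i ∈ AddSubgroup.zmultiples (1:ℝ) :=
      (QuotientAddGroup.eq).mp h1
    obtain ⟨m, hm⟩ := AddSubgroup.mem_zmultiples_iff.mp h2
    refine ⟨-m, ?_⟩
    have : (m : ℝ) = -((proj d x) i).out + x i := by simpa using hm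
    push_cast
    linarith
  choose m hm using h
  have : (fun i => ((proj d x) i).out) = x + fun i => ((m i : ℝ)) := funext fun i => by
    rw [hm i]; rfl
  rw [tlift, this, hper]

lemma continuous_tlift (f : (Fin d → ℝ) → ℝ) (hf : Continuous f)
    (hper : ∀ (x : Fin d → ℝ) (m : Fin d → ℤ), f (x + fun i => (m i : ℝ)) = f x) :
    Continuous (tlift f) := by
  rw [← (isOpenQuotientMap_proj (d := d)).continuous_comp_iff]
  have : tlift f ∘ proj d = f := funext fun x => tlift_proj f hper x
  rw [this]; exact hf

/-- Averages of twisted geometric sequences converge. -/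
lemma avg_geom (z w : ℂ) (hz : ‖z‖ = 1) :
    ∃ c, Tendsto (fun J : ℕ => (J:ℂ)⁻¹ * ∑ j ∈ Finset.Icc 1 J, w * z ^ j)
      atTop (nhds c) := by
  by_cases h1 : z = 1
  · refine ⟨w, Tendsto.congr' ?_ tendsto_const_nhds⟩
    filter_upwards [eventually_ge_atTop 1] with J hJ
    subst h1
    have hJ' : (J : ℂ) ≠ 0 := Nat.cast_ne_zero.mpr (by omega)
    simp only [one_pow, Finset.sum_const, Nat.card_Icc, Nat.add_sub_cancel, nsmul_eq_mul]
    rw [← mul_assoc, inv_mul_cancel₀ hJ', one_mul, mul_one]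
  · refine ⟨0, ?_⟩
    have hz1 : z - 1 ≠ 0 := sub_ne_zero.mpr h1
    have key : ∀ J : ℕ, ∑ j ∈ Finset.Icc 1 J, z ^ j = (z ^ (J+1) - 1)/(z - 1) - 1 := by
      intro J
      induction J with
      | zero => simp [div_self hz1]
      | succ J ih =>
          rw [Finset.sum_Icc_succ_top (by omega : 1 ≤ J+1), ih]
          field_simp
          ring
    have hb : ∀ J : ℕ, ‖(J:ℂ)⁻¹ * ∑ j ∈ Finset.Icc 1 J, w * z ^ j‖
        ≤ (‖w‖ * (2 / ‖z-1‖ + 1)) / J := by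
      intro J
      rcases Nat.eq_zero_or_pos J with h | h
      · subst h; simp
      · rw [norm_mul, norm_inv, Complex.norm_natCast, div_eq_inv_mul]
        refine mul_le_mul_of_nonneg_left ?_ (by positivity)
        rw [← Finset.mul_sum, key J, norm_mul]
        refine mul_le_mul_of_nonneg_left ?_ (norm_nonneg w)
        calc ‖(z ^ (J+1) - 1)/(z - 1) - 1‖ ≤ ‖(z ^ (J+1) - 1)/(z - 1)‖ + 1 := by
              simpa using norm_sub_le ((z ^ (J+1) - 1)/(z - 1)) 1
        _ ≤ 2 / ‖z-1‖ + 1 := by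
              rw [norm_div]
              gcongr
              calc ‖z ^ (J+1) - 1‖ ≤ ‖z ^ (J+1)‖ + 1 := by
                    simpa using norm_sub_le (z ^ (J+1)) 1
              _ = 2 := by rw [norm_pow, hz]; norm_num
    exact squeeze_zero_norm hb (tendsto_const_div_atTop_nhds_zero_nat _)

open Real in
/-- The twisted sequence of a character is a twisted geometric sequence. -/
lemma char_seq (k : Fin d → ℤ) (ω φ : Fin d → ℝ) (θ : ℝ) :
    ∃ z w : ℂ, ‖z‖ = 1 ∧ ∀ j : ℕ,
      Complex.exp (-(Complex.I * (θ:ℂ) * (j:ℂ))) * mchar k (proj d ((j:ℝ) • ω + φ))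
        = w * z ^ j := by
  refine ⟨Complex.exp (Complex.I * ((2*π*(∑ i, (k i : ℝ) * ω i) - θ : ℝ) : ℂ)),
          Complex.exp (Complex.I * ((2*π*(∑ i, (k i : ℝ) * φ i) : ℝ) : ℂ)), ?_, ?_⟩
  · rw [Complex.norm_exp]
    simp [Complex.mul_re]
  · intro j
    rw [mchar_apply]
    have hx : ∀ i : Fin d, proj d ((j:ℝ) • ω + φ) i
        = (((j:ℝ) * ω i + φ i : ℝ) : AddCircle (1:ℝ)) := fun i => rfl
    simp_rw [hx, fourier_coe_apply]
    rw [← Complex.exp_sum, ← Complex.exp_add, ← Complex.exp_nat_mul, ← Complex.exp_add]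
    congr 1
    push_cast
    have split : ∑ i : Fin d, 2*(π:ℂ)*Complex.I*(k i : ℂ)*(((j:ℕ):ℂ)*(ω i : ℂ)+(φ i : ℂ))/1
        = ((j:ℕ):ℂ)*(2*(π:ℂ)*Complex.I*(∑ i : Fin d, (k i : ℂ)*(ω i : ℂ)))
          + 2*(π:ℂ)*Complex.I*(∑ i : Fin d, (k i : ℂ)*(φ i : ℂ)) := by
      rw [Finset.mul_sum, Finset.mul_sum, Finset.mul_sum, ← Finset.sum_add_distrib]
      exact Finset.sum_congr rfl fun i _ => by ring
    rw [split]
    ring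

/-- Twisted Birkhoff averages converge for every element of the span of the characters. -/
lemma avg_span (ω φ : Fin d → ℝ) (θ : ℝ) (g : C(Tor d, ℂ))
    (hg : g ∈ span ℂ (Set.range (mchar (d := d)))) :
    ∃ c, Tendsto (fun J : ℕ => (J:ℂ)⁻¹ * ∑ j ∈ Finset.Icc 1 J,
      Complex.exp (-(Complex.I * (θ:ℂ) * (j:ℂ))) * g (proj d ((j:ℝ) • ω + φ)))
      atTop (nhds c) := by
  induction hg using Submodule.span_induction with
  | mem x h =>
      obtain ⟨k, rfl⟩ := h
      obtain ⟨z, w, hz, hw⟩ := char_seq k ω φ θ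
      obtain ⟨c, hc⟩ := avg_geom z w hz
      exact ⟨c, by simpa only [hw] using hc⟩
  | zero => exact ⟨0, by simpa using tendsto_const_nhds⟩
  | add x y hx hy ihx ihy =>
      obtain ⟨c1, hc1⟩ := ihx
      obtain ⟨c2, hc2⟩ := ihy
      refine ⟨c1 + c2, (hc1.add hc2).congr fun J => ?_⟩
      rw [← mul_add, ← Finset.sum_add_distrib]
      congr 1
      exact Finset.sum_congr rfl fun j _ => by
        simp [ContinuousMap.add_apply, mul_add]
  | smul a x hx ih =>
      obtain ⟨c, hc⟩ := ih
      refine ⟨a * c, (hc.const_mul a).congr fun J => ?_⟩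
      rw [← mul_assoc, mul_comm a ((J:ℂ)⁻¹), mul_assoc, Finset.mul_sum]
      congr 1
      exact Finset.sum_congr rfl fun j _ => by
        simp [ContinuousMap.smul_apply, smul_eq_mul]; ring

/-- Convergence of averages is stable under uniform approximation. -/
lemma avg_exists (a : ℕ → ℂ)
    (H : ∀ ε : ℝ, 0 < ε → ∃ b : ℕ → ℂ, (∀ j, ‖a j - b j‖ ≤ ε) ∧
      ∃ c, Tendsto (fun J : ℕ => (J:ℂ)⁻¹ * ∑ j ∈ Finset.Icc 1 J, b j) atTop (nhds c)) :
    ∃ c, Tendsto (fun J : ℕ => (J:ℂ)⁻¹ * ∑ j ∈ Finset.Icc 1 J, a j) atTop (nhds c) := by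
  set A : ℕ → ℂ := fun J => (J:ℂ)⁻¹ * ∑ j ∈ Finset.Icc 1 J, a j with hA
  have hcau : CauchySeq A := by
    rw [Metric.cauchySeq_iff]
    intro ε hε
    obtain ⟨b, hb, c, hc⟩ := H (ε/4) (by linarith)
    set B : ℕ → ℂ := fun J => (J:ℂ)⁻¹ * ∑ j ∈ Finset.Icc 1 J, b j with hB
    have hAB : ∀ J : ℕ, 1 ≤ J → dist (A J) (B J) ≤ ε/4 := by
      intro J hJ
      rw [dist_eq_norm, hA, hB]
      simp only
      rw [← mul_sub, ← Finset.sum_sub_distrib, norm_mul, norm_inv, Complex.norm_natCast]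
      have h1 : ‖∑ j ∈ Finset.Icc 1 J, (a j - b j)‖ ≤ (J : ℝ) * (ε/4) := by
        calc ‖∑ j ∈ Finset.Icc 1 J, (a j - b j)‖ ≤ ∑ j ∈ Finset.Icc 1 J, ‖a j - b j‖ :=
              norm_sum_le _ _
        _ ≤ ∑ _j ∈ Finset.Icc 1 J, (ε/4) := Finset.sum_le_sum fun j _ => hb j
        _ = (J : ℝ) * (ε/4) := by
              rw [Finset.sum_const, Nat.card_Icc, Nat.add_sub_cancel, nsmul_eq_mul]
      have hJ0 : (0:ℝ) < (J:ℝ) := by exact_mod_cast hJ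
      calc ((J:ℝ))⁻¹ * ‖∑ j ∈ Finset.Icc 1 J, (a j - b j)‖
          ≤ ((J:ℝ))⁻¹ * ((J : ℝ) * (ε/4)) := by
            exact mul_le_mul_of_nonneg_left h1 (by positivity)
      _ = ε/4 := by field_simp
    obtain ⟨N0, hN0⟩ := Metric.cauchySeq_iff.mp hc.cauchySeq (ε/4) (by linarith)
    refine ⟨max N0 1, fun m hm n hn => ?_⟩
    have h1 : dist (A m) (A n) ≤ dist (A m) (B m) + dist (B m) (B n) + dist (B n) (A n) :=
      dist_triangle4 _ _ _ _
    have h2 := hAB m (le_trans (le_max_right _ _) hm)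
    have h3 := hAB n (le_trans (le_max_right _ _) hn)
    have h4 := hN0 m (le_trans (le_max_left _ _) hm) n (le_trans (le_max_left _ _) hn)
    have h3' : dist (B n) (A n) ≤ ε/4 := by rw [dist_comm]; exact h3
    linarith
  exact cauchySeq_tendsto_of_complete hcau

end AP13

end

end AP13Aux

/-- Let `f : ℝ^d → ℝ` be continuous and `ℤ^d`-periodic, `ω φ ∈ ℝ^d`,
and `b j = f (j • ω + φ)`. Then for every `θ ∈ ℝ` the almost-periodic Fourier
coefficient `C(θ) = lim_{J→∞} (1/J) ∑_{j=1}^J e^{−iθj} b j` exists in ℂ. -/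
theorem stmt_13 (d : ℕ) (hd : 1 ≤ d) (f : (Fin d → ℝ) → ℝ) (hf : Continuous f)
    (hper : ∀ (x : Fin d → ℝ) (m : Fin d → ℤ), f (x + fun i => (m i : ℝ)) = f x)
    (ω φ : Fin d → ℝ) (θ : ℝ) :
    ∃ c : ℂ, Tendsto
      (fun J : ℕ => (J : ℂ)⁻¹ * ∑ j ∈ Finset.Icc 1 J,
        Complex.exp (-(Complex.I * (θ : ℂ) * (j : ℂ))) * ((f ((j : ℝ) • ω + φ) : ℝ) : ℂ))
      atTop (nhds c) := by
  classical
  haveI : Fact (0 < (1:ℝ)) := ⟨one_pos⟩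
  -- the complex-valued lifted function on the torus
  set F : C(AP13.Tor d, ℂ) :=
    ⟨fun x => ((AP13.tlift f x : ℝ) : ℂ),
      Complex.continuous_ofReal.comp (AP13.continuous_tlift f hf hper)⟩ with hF
  apply AP13.avg_exists
  intro ε hε
  -- density of the span of characters
  have hdense : F ∈ closure ((Submodule.span ℂ (Set.range (AP13.mchar (d := d)))) : Set _) := by
    rw [← Submodule.topologicalClosure_coe, AP13.span_mchar_closure_eq_top d]
    trivial
  obtain ⟨g, hgmem, hdist⟩ := Metric.mem_closure_iff.mp hdense ε hε
  refine ⟨fun j => Complex.exp (-(Complex.I * (θ:ℂ) * (j:ℂ)))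
      * g (AP13.proj d ((j:ℝ) • ω + φ)), fun j => ?_, AP13.avg_span ω φ θ g hgmem⟩
  have hval : ((f ((j:ℝ) • ω + φ) : ℝ) : ℂ) = F (AP13.proj d ((j:ℝ) • ω + φ)) := by
    rw [hF]
    simp only [ContinuousMap.coe_mk]
    rw [AP13.tlift_proj f hper]
  rw [hval, ← mul_sub, norm_mul]
  have hexp : ‖Complex.exp (-(Complex.I * (θ:ℂ) * (j:ℂ)))‖ = 1 := by
    rw [Complex.norm_exp]
    simp [Complex.mul_re]
  rw [hexp, one_mul]
  calc ‖F (AP13.proj d ((j:ℝ) • ω + φ)) - g (AP13.proj d ((j:ℝ) • ω + φ))‖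
      = dist (F (AP13.proj d ((j:ℝ) • ω + φ))) (g (AP13.proj d ((j:ℝ) • ω + φ))) :=
        (dist_eq_norm _ _).symm
  _ ≤ dist F g := ContinuousMap.dist_apply_le_dist _
  _ ≤ ε := le_of_lt hdist
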